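/- Let d ≥ 1, T₀ > 0 and C_B > 0. Then there exist C > 0 and ε₀ ∈ (0,1] such that for every ε ∈ (0,ε₀], every continuous B̂ : [0,T₀] → ℓ¹₂(ℤ^d) with sup_{T∈[0,T₀]} ‖B̂(T)‖_{ℓ¹₂} ≤ C_B, and every t ∈ [0, T₀/ε²]: Σ_{K∈ℤ^d, ε|K| ≥ 1/10 and |εK+2e₁| ≥ 1/10} |∫₀^t e^{λ(e₁+εK)(t−τ)} (−4ε⁴K₁³ − ε⁵K₁⁴) B̂(K, ε²τ) dτ| ≤ C ε³. -/

import Mathlib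

/-- The weight `(1 + |K|²)^{r/2}` on the lattice `ℤ^d`. -/
noncomputable def wt (d : ℕ) (r : ℝ) (K : Fin d → ℤ) : ℝ :=
  (1 + ∑ i, ((K i : ℝ)) ^ 2) ^ (r / 2)

/-- Continuity of `T ↦ B(T)` on `[0,T₀]` with respect to the `ℓ¹_r` norm. -/
def NormContOn (d : ℕ) (r T₀ : ℝ) (B : ℝ → (Fin d → ℤ) → ℂ) : Prop :=
  ∀ T ∈ Set.Icc (0 : ℝ) T₀, ∀ η > 0, ∃ ν > 0, ∀ T' ∈ Set.Icc (0 : ℝ) T₀,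
    |T' - T| < ν → ∑' K : Fin d → ℤ, ‖B T' K - B T K‖ * wt d r K < η

open MeasureTheory intervalIntegral Set

noncomputable def GG' (s : ℝ) : ℝ := Real.exp (-(s/80000)) * (1 + s ^ (-(1:ℝ)/2))

lemma GG'_nonneg {s : ℝ} (hs : 0 ≤ s) : 0 ≤ GG' s := by
  have : (0:ℝ) ≤ s ^ (-(1:ℝ)/2) := Real.rpow_nonneg hs _
  unfold GG'; positivity

lemma rpow_II (a b : ℝ) : IntervalIntegrable (fun s : ℝ => s ^ (-(1:ℝ)/2)) volume a b := by
  simpa using intervalIntegral.intervalIntegrable_rpow' (a := a) (b := b)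
    (r := -(1:ℝ)/2) (by norm_num)

lemma exprpow_II (a b : ℝ) :
    IntervalIntegrable (fun s : ℝ => Real.exp (-(s/80000)) * s ^ (-(1:ℝ)/2)) volume a b :=
  (rpow_II a b).continuousOn_mul ((Real.continuous_exp.comp (by continuity)).continuousOn)

lemma exp_II (a b : ℝ) :
    IntervalIntegrable (fun s : ℝ => Real.exp (-(s/80000))) volume a b :=
  (Real.continuous_exp.comp (by continuity)).intervalIntegrable a b

lemma GG'_II (a b : ℝ) : IntervalIntegrable GG' volume a b := by
  have h2 := (_root_.intervalIntegrable_const (c := (1:ℝ)) (μ := volume) (a := a) (b := b)).add (rpow_II a b)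
  have h3 : ContinuousOn (fun s : ℝ => Real.exp (-(s/80000))) (Set.uIcc a b) :=
    (Real.continuous_exp.comp (by continuity)).continuousOn
  unfold GG'
  exact h2.continuousOn_mul h3

lemma exp_deriv_aux (s : ℝ) :
    HasDerivAt (fun s : ℝ => -80000 * Real.exp (-(s/80000))) (Real.exp (-(s/80000))) s := by
  have h1 : HasDerivAt (fun s : ℝ => -(s/80000)) (-(1/80000)) s := by
    exact ((hasDerivAt_id' s).div_const 80000).neg
  have := (h1.exp).const_mul (-80000 : ℝ)
  refine this.congr_deriv ?_
  ring

lemma integral_exp_neg_le (u v : ℝ) (h : u ≤ v) (hu : 0 ≤ u) :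
    ∫ s in u..v, Real.exp (-(s/80000)) ≤ 80000 := by
  rw [intervalIntegral.integral_eq_sub_of_hasDerivAt (fun s _ => exp_deriv_aux s)
    (exp_II u v)]
  have h1 : (0:ℝ) ≤ Real.exp (-(v/80000)) := Real.exp_nonneg _
  have h2 : Real.exp (-(u/80000)) ≤ 1 := Real.exp_le_one_iff.mpr (by nlinarith)
  nlinarith

lemma integral_rpow_half (c : ℝ) (hc : 0 ≤ c) (hc1 : c ≤ 1) :
    ∫ s in (0:ℝ)..c, Real.exp (-(s/80000)) * s ^ (-(1:ℝ)/2) ≤ 2 := by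
  have h1 : ∫ s in (0:ℝ)..c, Real.exp (-(s/80000)) * s ^ (-(1:ℝ)/2)
      ≤ ∫ s in (0:ℝ)..c, s ^ (-(1:ℝ)/2) := by
    apply intervalIntegral.integral_mono_on hc (exprpow_II 0 c) (rpow_II 0 c)
    intro x hx
    have hr : (0:ℝ) ≤ x ^ (-(1:ℝ)/2) := Real.rpow_nonneg hx.1 _
    have he : Real.exp (-(x/80000)) ≤ 1 := Real.exp_le_one_iff.mpr (by nlinarith [hx.1])
    nlinarith [Real.exp_nonneg (-(x/80000))]
  have h2 : ∫ s in (0:ℝ)..c, s ^ (-(1:ℝ)/2)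
      = (c ^ ((-(1:ℝ)/2) + 1) - (0:ℝ) ^ ((-(1:ℝ)/2) + 1)) / ((-(1:ℝ)/2) + 1) :=
    integral_rpow (Or.inl (by norm_num))
  have h3 : c ^ ((-(1:ℝ)/2) + 1) ≤ 1 := Real.rpow_le_one hc hc1 (by norm_num)
  have h4 : (0:ℝ) ^ ((-(1:ℝ)/2) + 1) = 0 := Real.zero_rpow (by norm_num)
  have h5 : ∫ s in (0:ℝ)..c, s ^ (-(1:ℝ)/2) ≤ 2 := by
    rw [h2, h4]; rw [show (-(1:ℝ)/2) + 1 = 1/2 by norm_num] at h3 ⊢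
    nlinarith
  linarith

lemma integral_exprpow_le (t : ℝ) (ht : 0 ≤ t) :
    ∫ s in (0:ℝ)..t, Real.exp (-(s/80000)) * s ^ (-(1:ℝ)/2) ≤ 80002 := by
  rcases le_total t 1 with h | h
  · linarith [integral_rpow_half t ht h]
  · have e1 : (∫ s in (0:ℝ)..1, Real.exp (-(s/80000)) * s ^ (-(1:ℝ)/2))
        + ∫ s in (1:ℝ)..t, Real.exp (-(s/80000)) * s ^ (-(1:ℝ)/2)
        = ∫ s in (0:ℝ)..t, Real.exp (-(s/80000)) * s ^ (-(1:ℝ)/2) :=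
      intervalIntegral.integral_add_adjacent_intervals (exprpow_II 0 1) (exprpow_II 1 t)
    have e2 : ∫ s in (1:ℝ)..t, Real.exp (-(s/80000)) * s ^ (-(1:ℝ)/2)
        ≤ ∫ s in (1:ℝ)..t, Real.exp (-(s/80000)) := by
      apply intervalIntegral.integral_mono_on h (exprpow_II 1 t) (exp_II 1 t)
      intro x hx
      have hr : x ^ (-(1:ℝ)/2) ≤ 1 :=
        Real.rpow_le_one_of_one_le_of_nonpos hx.1 (by norm_num)
      nlinarith [Real.exp_nonneg (-(x/80000)), Real.rpow_nonneg (le_trans zero_le_one hx.1) (-(1:ℝ)/2)]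
    have e3 := integral_exp_neg_le 1 t h zero_le_one
    have e4 := integral_rpow_half 1 zero_le_one le_rfl
    linarith

lemma GG'_integral_le (t : ℝ) (ht : 0 ≤ t) : ∫ s in (0:ℝ)..t, GG' s ≤ 160002 := by
  have hc : ∀ s : ℝ, GG' s = Real.exp (-(s/80000)) + Real.exp (-(s/80000)) * s ^ (-(1:ℝ)/2) := by
    intro s; unfold GG'; ring
  rw [intervalIntegral.integral_congr (g := fun s => Real.exp (-(s/80000))
      + Real.exp (-(s/80000)) * s ^ (-(1:ℝ)/2)) (fun x _ => hc x)]
  rw [intervalIntegral.integral_add (exp_II 0 t) (exprpow_II 0 t)]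
  linarith [integral_exp_neg_le 0 t ht le_rfl, integral_exprpow_le t ht]



-- L ≤ 10 x (1 + √L)
lemma L_le_aux (L x : ℝ) (hL : (1:ℝ)/40000 ≤ L) (hx : (1:ℝ)/100 ≤ x)
    (hLx : L ≤ 8*x + 2*x^2) : L ≤ 10*x*(1 + Real.sqrt L) := by
  have hL0 : (0:ℝ) ≤ L := by linarith
  set u := Real.sqrt L with hu
  have hu0 : 0 ≤ u := Real.sqrt_nonneg L
  have hu2 : u^2 = L := Real.sq_sqrt hL0
  rcases le_total x 1 with h1 | h1
  · nlinarith [mul_nonneg (by linarith : (0:ℝ) ≤ 10*x) hu0]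
  · rcases le_total u (10*x) with h2 | h2
    · nlinarith
    · exfalso; nlinarith

lemma sqrt_exp_aux (L s : ℝ) (hL : 0 ≤ L) (hs : 0 < s) :
    Real.sqrt L * Real.exp (-(L*s)/2) ≤ (Real.sqrt s)⁻¹ := by
  have hsq : 0 < Real.sqrt s := Real.sqrt_pos.2 hs
  have h1 : L*s ≤ Real.exp (L*s) := by linarith [Real.add_one_le_exp (L*s)]
  have h3 : Real.exp (L*s/2)^2 = Real.exp (L*s) := by
    rw [sq, ← Real.exp_add]; ring_nf
  have h2 : Real.sqrt (L*s) ≤ Real.exp (L*s/2) := by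
    calc Real.sqrt (L*s) ≤ Real.sqrt (Real.exp (L*s)) := Real.sqrt_le_sqrt h1
      _ = Real.exp (L*s/2) := by rw [← h3, Real.sqrt_sq (Real.exp_nonneg _)]
  have h4 : Real.sqrt L * Real.sqrt s ≤ Real.exp (L*s/2) := by
    rwa [← Real.sqrt_mul hL] 
  have h5 : Real.exp (-(L*s)/2) = (Real.exp (L*s/2))⁻¹ := by
    rw [← Real.exp_neg]; congr 1; ring
  rw [h5, ← div_eq_mul_inv, ← one_div, div_le_div_iff₀ (Real.exp_pos _) hsq]
  nlinarith [Real.sqrt_nonneg L]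

-- main exponential bound
lemma expmul (L x s : ℝ) (hL : (1:ℝ)/40000 ≤ L) (hx : (1:ℝ)/100 ≤ x)
    (hLx : L ≤ 8*x + 2*x^2) (hs : 0 < s) :
    Real.exp (-(L*s)) * (L + 4*x) ≤ 14*x*GG' s := by
  have hL0 : (0:ℝ) ≤ L := by linarith
  have hx0 : (0:ℝ) < x := by linarith
  set u := Real.sqrt L with hu
  have hu0 : 0 ≤ u := Real.sqrt_nonneg L
  have hC := L_le_aux L x hL hx hLx
  have hkey := sqrt_exp_aux L s hL0 hs
  have e1 : Real.exp (-(L*s)) ≤ Real.exp (-(s/80000)) :=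
    Real.exp_le_exp.2 (by nlinarith)
  have e2 : Real.exp (-(L*s)/2) ≤ Real.exp (-(s/80000)) :=
    Real.exp_le_exp.2 (by nlinarith)
  have e3 : Real.exp (-(L*s)) = Real.exp (-(L*s)/2) * Real.exp (-(L*s)/2) := by
    rw [← Real.exp_add]; ring_nf
  have hrp : s ^ (-(1:ℝ)/2) = (Real.sqrt s)⁻¹ := by
    rw [show (-(1:ℝ)/2) = -(1/2) by ring, Real.rpow_neg hs.le,
      show ((1:ℝ)/2) = (1/2 : ℝ) by norm_num, ← Real.sqrt_eq_rpow]
  have hue : u * Real.exp (-(L*s)) ≤ (Real.sqrt s)⁻¹ * Real.exp (-(s/80000)) := by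
    rw [e3, ← mul_assoc]
    exact mul_le_mul hkey e2 (Real.exp_nonneg _) (inv_nonneg.2 (Real.sqrt_nonneg s))
  have hLe : L * Real.exp (-(L*s)) ≤ 10*x*(1+u) * Real.exp (-(L*s)) :=
    mul_le_mul_of_nonneg_right hC (Real.exp_nonneg _)
  have hexp0 : 0 ≤ Real.exp (-(L*s)) := Real.exp_nonneg _
  have hexps : 0 ≤ Real.exp (-(s/80000)) := Real.exp_nonneg _
  have hinv : 0 ≤ (Real.sqrt s)⁻¹ := inv_nonneg.2 (Real.sqrt_nonneg s)
  unfold GG'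
  rw [hrp]
  have p1 : 10*x*(u * Real.exp (-(L*s))) ≤ 10*x*((Real.sqrt s)⁻¹ * Real.exp (-(s/80000))) :=
    mul_le_mul_of_nonneg_left hue (by linarith)
  have p2 : 10*x*Real.exp (-(L*s)) ≤ 10*x*Real.exp (-(s/80000)) :=
    mul_le_mul_of_nonneg_left e1 (by linarith)
  have p3 : 4*x*Real.exp (-(L*s)) ≤ 4*x*Real.exp (-(s/80000)) :=
    mul_le_mul_of_nonneg_left e1 (by linarith)
  have p4 : 0 ≤ 4*x*((Real.sqrt s)⁻¹ * Real.exp (-(s/80000))) := by positivity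
  have expand : 10*x*(1+u)*Real.exp (-(L*s))
      = 10*x*Real.exp (-(L*s)) + 10*x*(u*Real.exp (-(L*s))) := by ring
  have goal_expand : 14*x*(Real.exp (-(s/80000)) * (1 + (Real.sqrt s)⁻¹))
      = 14*x*Real.exp (-(s/80000)) + 14*x*((Real.sqrt s)⁻¹*Real.exp (-(s/80000))) := by ring
  have lhs_expand : Real.exp (-(L*s)) * (L + 4*x)
      = L*Real.exp (-(L*s)) + 4*x*Real.exp (-(L*s)) := by ring
  linarith

-- the per-K core inequality
lemma core (ε a P S m s : ℝ) (hε : 0 < ε) (hP : 0 ≤ P) (hS : ε^2*S = a^2 + P)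
    (hx : (1:ℝ)/100 ≤ a^2 + P) (hQ : (1:ℝ)/100 ≤ (a+2)^2 + P) (hs : 0 < s)
    (hm : m = -(ε*(4*a^3 + a^4))) :
    Real.exp ((-(1-(1+a)^2)^2 - 4*P) * s) * |m| ≤ ε^3 * (1+S) * (14 * GG' s) := by
  obtain ⟨L, hLdef⟩ : ∃ L : ℝ, L = a^2*(2+a)^2 + 4*P := ⟨_, rfl⟩
  obtain ⟨x, hxdef⟩ : ∃ x : ℝ, x = a^2 + P := ⟨_, rfl⟩
  have harg : (-(1-(1+a)^2)^2 - 4*P) * s = -(L*s) := by rw [hLdef]; ring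
  have hσL : (1:ℝ)/40000 ≤ L := by
    rcases le_or_gt (1/200) P with h | h
    · nlinarith [sq_nonneg (a*(2+a))]
    · have h3 : (1:ℝ)/200 ≤ a^2 := by nlinarith
      have h4 : (1:ℝ)/200 ≤ (a+2)^2 := by nlinarith
      nlinarith [mul_le_mul h3 h4 (by norm_num) (sq_nonneg a)]
  have hx100 : (1:ℝ)/100 ≤ x := by rw [hxdef]; exact hx
  have hL8 : L ≤ 8*x + 2*x^2 := by
    rw [hLdef, hxdef]
    nlinarith [sq_nonneg (a*(a-2)), mul_nonneg (sq_nonneg a) hP, sq_nonneg P]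
  have hmabs : |m| ≤ ε*(L + 4*x) := by
    rw [hm, abs_neg, abs_mul, abs_of_pos hε]
    have h1 : |4*a^3 + a^4| ≤ L + 4*x := by
      rw [abs_le, hLdef, hxdef]
      constructor
      · nlinarith [sq_nonneg (a*(a+2))]
      · nlinarith [sq_nonneg a]
    exact mul_le_mul_of_nonneg_left h1 hε.le
  have hmain := expmul L x s hσL hx100 hL8 hs
  have hS0 : 0 ≤ S := by nlinarith [sq_nonneg a, sq_nonneg ε]
  have hG0 : 0 ≤ GG' s := by
    have : (0:ℝ) ≤ s ^ (-(1:ℝ)/2) := Real.rpow_nonneg hs.le _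
    unfold GG'; positivity
  have hεx : ε * x ≤ ε^3 * (1+S) := by
    have hxS : x = ε^2 * S := by rw [hxdef, ← hS]
    rw [hxS]; nlinarith [sq_nonneg ε]
  rw [harg]
  have hexp0 : 0 ≤ Real.exp (-(L*s)) := Real.exp_nonneg _
  calc Real.exp (-(L*s)) * |m| ≤ Real.exp (-(L*s)) * (ε*(L+4*x)) :=
        mul_le_mul_of_nonneg_left hmabs hexp0
    _ = ε * (Real.exp (-(L*s)) * (L+4*x)) := by ring
    _ ≤ ε * (14*x*GG' s) := mul_le_mul_of_nonneg_left hmain hε.le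
    _ = (ε*x) * (14 * GG' s) := by ring
    _ ≤ (ε^3*(1+S)) * (14 * GG' s) := mul_le_mul_of_nonneg_right hεx (by positivity)

/-- the stable-mode Duhamel contribution of the linear residual
term involving the regular part `B̂ ∈ ℓ¹₂` (wave vectors `k = e₁ + εK` with
`|k − e₁| = ε|K| ≥ 1/10` and `|k + e₁| = |εK + 2e₁| ≥ 1/10`) is `O(ε³)`
uniformly on `[0, T₀/ε²]`. -/
theorem stable_linear_residual_B (d : ℕ) (hd : 0 < d)
    (T₀ CB : ℝ) (hT₀ : 0 < T₀) (hCB : 0 < CB) :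
    ∃ C > 0, ∃ ε₀ ∈ Set.Ioc (0 : ℝ) 1, ∀ ε ∈ Set.Ioc (0 : ℝ) ε₀,
      ∀ B : ℝ → (Fin d → ℤ) → ℂ,
        NormContOn d 2 T₀ B →
        (∀ T ∈ Set.Icc (0 : ℝ) T₀, Summable (fun K => ‖B T K‖ * wt d 2 K)) →
        (∀ T ∈ Set.Icc (0 : ℝ) T₀, ∑' K : Fin d → ℤ, ‖B T K‖ * wt d 2 K ≤ CB) →
        ∀ t ∈ Set.Icc (0 : ℝ) (T₀ / ε ^ 2),
          (∑' K : Fin d → ℤ,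
            if (1 / 10 ≤ ε * Real.sqrt (∑ i, ((K i : ℝ)) ^ 2)
                ∧ 1 / 10 ≤ Real.sqrt (∑ i, (ε * (K i : ℝ)
                  + if i = (⟨0, hd⟩ : Fin d) then 2 else 0) ^ 2)) then
              ‖∫ τ in (0 : ℝ)..t,
                (Real.exp ((-(1 - (1 + ε * (K ⟨0, hd⟩ : ℝ)) ^ 2) ^ 2
                      - 4 * ∑ i ∈ Finset.univ.filter (fun i => i ≠ (⟨0, hd⟩ : Fin d)),
                          (ε * (K i : ℝ)) ^ 2) * (t - τ))
                    * (-4 * ε ^ 4 * (K ⟨0, hd⟩ : ℝ) ^ 3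
                      - ε ^ 5 * (K ⟨0, hd⟩ : ℝ) ^ 4)) • B (ε ^ 2 * τ) K‖
            else 0) ≤ C * ε ^ 3 := by
  classical
  refine ⟨2240028 * CB, by positivity, 1, ⟨one_pos, le_rfl⟩, ?_⟩
  intro ε hε B hBcont hBsum hBle t ht
  obtain ⟨hε0, hε1⟩ := hε
  obtain ⟨ht0, ht1⟩ := ht
  set i₀ : Fin d := ⟨0, hd⟩ with hi₀
  have hε2 : (0:ℝ) < ε^2 := by positivity
  have htT : ε^2 * t ≤ T₀ := by
    have h := (le_div_iff₀ hε2).mp ht1; linarith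
  have hmemT : ∀ τ : ℝ, 0 ≤ τ → τ ≤ t → ε^2*τ ∈ Set.Icc (0:ℝ) T₀ := by
    intro τ h1 h2
    refine ⟨by positivity, ?_⟩
    nlinarith
  have hwt : ∀ K : Fin d → ℤ, wt d 2 K = 1 + ∑ i, ((K i:ℝ))^2 := by
    intro K; unfold wt
    rw [show ((2:ℝ)/2) = 1 by norm_num, Real.rpow_one]
  have hS0 : ∀ K : Fin d → ℤ, (0:ℝ) ≤ ∑ i, ((K i:ℝ))^2 :=
    fun K => Finset.sum_nonneg fun i _ => sq_nonneg _
  have hwt0 : ∀ K, 0 ≤ wt d 2 K := fun K => by rw [hwt]; linarith [hS0 K]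
  have hwt1 : ∀ K, 1 ≤ wt d 2 K := fun K => by rw [hwt]; linarith [hS0 K]
  -- coordinatewise continuity in T
  have hcoord : ∀ K : Fin d → ℤ, ContinuousOn (fun T => B T K) (Set.Icc 0 T₀) := by
    intro K
    rw [Metric.continuousOn_iff]
    intro T hT η hη
    obtain ⟨ν, hν0, hνp⟩ := hBcont T hT η hη
    refine ⟨ν, hν0, fun T' hT' hdist => ?_⟩
    have hsum2 : Summable (fun K' : Fin d → ℤ => ‖B T' K' - B T K'‖ * wt d 2 K') := by
      apply Summable.of_nonneg_of_le
        (fun K' => mul_nonneg (norm_nonneg _) (hwt0 K')) ?_ ((hBsum T' hT').add (hBsum T hT))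
      intro K'
      have h1 := norm_sub_le (B T' K') (B T K')
      have h2 := mul_le_mul_of_nonneg_right h1 (hwt0 K')
      rw [add_mul] at h2
      exact h2
    have hle := Summable.le_tsum hsum2 K (fun j _ => mul_nonneg (norm_nonneg _) (hwt0 j))
    have hη2 := hνp T' hT' (by rwa [Real.dist_eq] at hdist)
    rw [dist_eq_norm]
    nlinarith [hwt1 K, norm_nonneg (B T' K - B T K)]
  have hcmul : ContinuousOn (fun τ : ℝ => ε^2*τ) (Set.Icc 0 t) :=
    (continuous_const.mul continuous_id).continuousOn
  have hmaps : Set.MapsTo (fun τ : ℝ => ε^2*τ) (Set.Icc 0 t) (Set.Icc 0 T₀) :=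
    fun τ hτ => hmemT τ hτ.1 hτ.2
  have hcoordt : ∀ K, ContinuousOn (fun τ => B (ε^2*τ) K) (Set.Icc 0 t) :=
    fun K => (hcoord K).comp hcmul hmaps
  -- reflected GG' integrability
  have hGrefl : IntervalIntegrable (fun τ => GG' (t - τ)) volume 0 t := by
    have h := (GG'_II 0 t).comp_sub_left t
    simpa using h.symm
  set majf : (Fin d → ℤ) → ℝ → ℝ :=
    fun K τ => ‖B (ε^2*τ) K‖ * wt d 2 K * (ε^3 * (14 * GG' (t - τ))) with hmajf
  have hmajII : ∀ K, IntervalIntegrable (majf K) volume 0 t := by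
    intro K
    have h1 : IntervalIntegrable (fun τ => (ε^3*14) * GG' (t - τ)) volume 0 t :=
      hGrefl.const_mul _
    have h2 : ContinuousOn (fun τ => ‖B (ε^2*τ) K‖ * wt d 2 K) (Set.uIcc 0 t) := by
      rw [Set.uIcc_of_le ht0]; exact ((hcoordt K).norm.mul continuousOn_const)
    have h3 := h1.continuousOn_mul h2
    simp only [hmajf]
    simpa [mul_assoc] using h3
  have hmajInt : ∀ K, MeasureTheory.IntegrableOn (majf K) (Set.Ioo 0 t) volume :=
    fun K => (intervalIntegrable_iff_integrableOn_Ioo_of_le ht0).mp (hmajII K)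
  set fterm : (Fin d → ℤ) → ℝ :=
    fun K =>
            if (1 / 10 ≤ ε * Real.sqrt (∑ i, ((K i : ℝ)) ^ 2)
                ∧ 1 / 10 ≤ Real.sqrt (∑ i, (ε * (K i : ℝ)
                  + if i = i₀ then 2 else 0) ^ 2)) then
              ‖∫ τ in (0 : ℝ)..t,
                (Real.exp ((-(1 - (1 + ε * (K i₀ : ℝ)) ^ 2) ^ 2
                      - 4 * ∑ i ∈ Finset.univ.filter (fun i => i ≠ i₀),
                          (ε * (K i : ℝ)) ^ 2) * (t - τ))
                    * (-4 * ε ^ 4 * (K i₀ : ℝ) ^ 3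
                      - ε ^ 5 * (K i₀ : ℝ) ^ 4)) • B (ε ^ 2 * τ) K‖
            else 0 with hfterm
  -- the per-K estimate
  have hcont_g : ∀ (K : Fin d → ℤ) (c1 c2 : ℝ),
      ContinuousOn (fun τ => (Real.exp (c1 * (t - τ)) * c2) • B (ε^2*τ) K) (Set.Icc 0 t) :=
    fun K c1 c2 =>
      (((Real.continuous_exp.comp
        ((continuous_const.mul (continuous_const.sub continuous_id)))).mul
          continuous_const).continuousOn).smul (hcoordt K)
  have hfK : ∀ K : Fin d → ℤ, fterm K ≤ ∫ τ in Set.Ioo (0:ℝ) t, majf K τ := by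
    intro K
    simp only [hfterm]
    split_ifs with hst
    · -- stable K
      have hs1 := hst.1
      have hs2 := hst.2
      obtain ⟨P, hPdef⟩ : ∃ P:ℝ, P = ∑ i ∈ Finset.univ.erase i₀, (ε*((K i : ℝ)))^2 := ⟨_, rfl⟩
      have hP0 : 0 ≤ P := hPdef ▸ Finset.sum_nonneg fun i _ => sq_nonneg _
      have e1 : ε^2*(∑ i, ((K i:ℝ))^2) = ∑ i, (ε*((K i:ℝ)))^2 := by
        rw [Finset.mul_sum]; exact Finset.sum_congr rfl fun i _ => by ring
      have e2 := Finset.sum_erase_add Finset.univ (fun i => (ε*((K i:ℝ)))^2) (Finset.mem_univ i₀)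
      have hεS : ε^2*(∑ i, ((K i:ℝ))^2) = (ε*((K i₀:ℝ)))^2 + P := by
        rw [e1, ← e2, hPdef]; ring
      have hx : (1:ℝ)/100 ≤ (ε*((K i₀:ℝ)))^2 + P := by
        have hS0' := hS0 K
        have h1 : (1/10:ℝ)*(1/10)
            ≤ (ε*Real.sqrt (∑ i, ((K i:ℝ))^2))*(ε*Real.sqrt (∑ i, ((K i:ℝ))^2)) :=
          mul_le_mul hs1 hs1 (by norm_num) (by positivity)
        have h2 : Real.sqrt (∑ i, ((K i:ℝ))^2) * Real.sqrt (∑ i, ((K i:ℝ))^2)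
            = ∑ i, ((K i:ℝ))^2 := Real.mul_self_sqrt hS0'
        nlinarith [hεS]
      have hQ0 : (0:ℝ) ≤ ∑ i, (ε * ((K i : ℝ)) + if i = i₀ then 2 else 0) ^ 2 :=
        Finset.sum_nonneg fun i _ => sq_nonneg _
      have hq1 : (1:ℝ)/100 ≤ ∑ i, (ε * ((K i : ℝ)) + if i = i₀ then 2 else 0) ^ 2 := by
        have h1 : (1/10:ℝ)*(1/10)
            ≤ (Real.sqrt (∑ i, (ε * ((K i : ℝ)) + if i = i₀ then 2 else 0) ^ 2))
              *(Real.sqrt (∑ i, (ε * ((K i : ℝ)) + if i = i₀ then 2 else 0) ^ 2)) :=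
          mul_le_mul hs2 hs2 (by norm_num) (Real.sqrt_nonneg _)
        have h2 := Real.mul_self_sqrt hQ0
        nlinarith
      have hq2 : (∑ i, (ε * ((K i : ℝ)) + if i = i₀ then 2 else 0) ^ 2)
          = P + (ε*((K i₀:ℝ)) + 2)^2 := by
        have h5 := Finset.sum_erase_add Finset.univ
          (fun i => (ε * ((K i : ℝ)) + if i = i₀ then 2 else 0) ^ 2) (Finset.mem_univ i₀)
        have h6 : ∀ i ∈ Finset.univ.erase i₀,
            (ε * ((K i:ℝ)) + if i = i₀ then 2 else 0)^2 = (ε*((K i:ℝ)))^2 := fun i hi => by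
          rw [if_neg (Finset.ne_of_mem_erase hi), add_zero]
        rw [← h5, Finset.sum_congr rfl h6, hPdef]
        simp
      have hQx : (1:ℝ)/100 ≤ (ε*((K i₀:ℝ)) + 2)^2 + P := by
        rw [hq2] at hq1; linarith
      have hPfilter : ∑ i ∈ Finset.univ.filter (fun i => i ≠ i₀), (ε*((K i:ℝ)))^2 = P := by
        rw [hPdef, Finset.filter_ne']
      -- pass to the set integral
      refine le_trans (intervalIntegral.norm_integral_le_integral_norm ht0) ?_
      rw [intervalIntegral.integral_of_le ht0, MeasureTheory.integral_Ioc_eq_integral_Ioo]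
      refine MeasureTheory.setIntegral_mono_on ?_ (hmajInt K) measurableSet_Ioo ?_
      · exact (((hcont_g K _ _).norm).integrableOn_Icc).mono_set Set.Ioo_subset_Icc_self
      · intro τ hτ
        have hs' : 0 < t - τ := by linarith [hτ.2]
        have hcore := core ε (ε*((K i₀:ℝ))) P (∑ i, ((K i:ℝ))^2)
          (-4 * ε ^ 4 * ((K i₀ : ℝ)) ^ 3 - ε ^ 5 * ((K i₀ : ℝ)) ^ 4) (t - τ)
          hε0 hP0 hεS hx hQx hs' (by ring)
        rw [norm_smul, Real.norm_eq_abs, abs_mul, Real.abs_exp, hPfilter]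
        simp only [hmajf]
        rw [hwt K]
        refine le_trans (mul_le_mul_of_nonneg_right hcore (norm_nonneg _)) (le_of_eq ?_)
        ring
    · -- non-stable K : term is 0
      apply MeasureTheory.setIntegral_nonneg measurableSet_Ioo
      intro τ hτ
      simp only [hmajf]
      have hG := GG'_nonneg (by linarith [hτ.2] : (0:ℝ) ≤ t - τ)
      have := hwt0 K
      positivity
  -- summation over finite sets
  have hmain : ∀ Fs : Finset (Fin d → ℤ), ∑ K ∈ Fs, fterm K ≤ 2240028*CB*ε^3 := by
    intro Fs
    have hCBInt : MeasureTheory.IntegrableOn (fun τ => CB * (ε^3*(14 * GG' (t - τ))))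
        (Set.Ioo 0 t) volume := by
      have h1 : IntervalIntegrable (fun τ => (CB*(ε^3*14)) * GG' (t - τ)) volume 0 t :=
        hGrefl.const_mul _
      have h2 := (intervalIntegrable_iff_integrableOn_Ioo_of_le ht0).mp h1
      have h3 : (fun τ => (CB*(ε^3*14)) * GG' (t - τ)) = (fun τ => CB * (ε^3*(14 * GG' (t - τ)))) :=
        funext fun τ => by ring
      rwa [h3] at h2
    have step1 : ∑ K ∈ Fs, fterm K ≤ ∑ K ∈ Fs, ∫ τ in Set.Ioo (0:ℝ) t, majf K τ :=
      Finset.sum_le_sum fun K _ => hfK K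
    have step2 : ∑ K ∈ Fs, ∫ τ in Set.Ioo (0:ℝ) t, majf K τ
        = ∫ τ in Set.Ioo (0:ℝ) t, ∑ K ∈ Fs, majf K τ :=
      (MeasureTheory.integral_finset_sum Fs (fun K _ => hmajInt K)).symm
    have step3 : ∫ τ in Set.Ioo (0:ℝ) t, (∑ K ∈ Fs, majf K τ)
        ≤ ∫ τ in Set.Ioo (0:ℝ) t, CB * (ε^3*(14 * GG' (t - τ))) := by
      apply MeasureTheory.setIntegral_mono_on
        (MeasureTheory.integrable_finset_sum Fs (fun K _ => hmajInt K)) hCBInt measurableSet_Ioo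
      intro τ hτ
      have hTmem := hmemT τ hτ.1.le hτ.2.le
      have hsum : ∑ K ∈ Fs, ‖B (ε^2*τ) K‖ * wt d 2 K ≤ CB :=
        le_trans (Summable.sum_le_tsum Fs (fun i _ => mul_nonneg (norm_nonneg _) (hwt0 i))
          (hBsum _ hTmem)) (hBle _ hTmem)
      have hG := GG'_nonneg (by linarith [hτ.2] : (0:ℝ) ≤ t - τ)
      have h0 : (0:ℝ) ≤ ε^3*(14 * GG' (t - τ)) := by positivity
      calc ∑ K ∈ Fs, majf K τ
          = (∑ K ∈ Fs, ‖B (ε^2*τ) K‖ * wt d 2 K) * (ε^3*(14 * GG' (t - τ))) := by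
            simp only [hmajf]; rw [Finset.sum_mul]
        _ ≤ CB * (ε^3*(14 * GG' (t - τ))) := mul_le_mul_of_nonneg_right hsum h0
    have step4 : ∫ τ in Set.Ioo (0:ℝ) t, CB * (ε^3*(14 * GG' (t - τ))) ≤ 2240028*CB*ε^3 := by
      have h3 : (fun τ => CB * (ε^3*(14 * GG' (t - τ)))) = (fun τ => (CB*ε^3*14) * GG' (t - τ)) :=
        funext fun τ => by ring
      rw [h3, ← MeasureTheory.integral_Ioc_eq_integral_Ioo, ← intervalIntegral.integral_of_le ht0,
        intervalIntegral.integral_const_mul]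
      have h4 : ∫ τ in (0:ℝ)..t, GG' (t - τ) = ∫ s in (0:ℝ)..t, GG' s := by
        rw [intervalIntegral.integral_comp_sub_left GG' t]
        norm_num
      rw [h4]
      have h5 := GG'_integral_le t ht0
      have h6 : (0:ℝ) ≤ CB*ε^3*14 := by positivity
      nlinarith
    linarith
  -- conclude
  by_cases hsf : Summable fterm
  · have := Summable.tsum_le_of_sum_le hsf hmain
    calc ∑' K, fterm K ≤ 2240028*CB*ε^3 := this
      _ = 2240028 * CB * ε ^ 3 := by ring
  · rw [tsum_eq_zero_of_not_summable hsf]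
    positivity
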